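/- For two points z, z' in the upper half-plane, |z-ρ|/|z-ρ⁻¹| = |z'-ρ|/|z'-ρ⁻¹| if and only if Im(z)/|z-ρ⁻¹|² = Im(z')/|z'-ρ⁻¹|², where ρ = exp(πi/3). -/

import Mathlib

open Complex Real

noncomputable def ρ : ℂ := Complex.exp (Real.pi * Complex.I / 3)

lemma rho_eq : ρ = Complex.mk (1/2) (Real.sqrt 3 / 2) := by
  have : (↑Real.pi * Complex.I / 3) = ↑(Real.pi / 3) * Complex.I := by
    push_cast; ring
  rw [ρ, this, Complex.exp_mul_I, ← Complex.ofReal_cos, ← Complex.ofReal_sin,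
    Real.cos_pi_div_three, Real.sin_pi_div_three]
  apply Complex.ext <;> simp

lemma rho_inv_eq : ρ⁻¹ = Complex.mk (1/2) (-(Real.sqrt 3 / 2)) := by
  have h3 : Real.sqrt 3 * Real.sqrt 3 = 3 := Real.mul_self_sqrt (by norm_num)
  refine inv_eq_of_mul_eq_one_right ?_
  rw [rho_eq]
  apply Complex.ext <;> simp [Complex.ext_iff, Complex.mul_re, Complex.mul_im] <;> nlinarith

lemma sq_abs_sub_rho_inv (z : ℂ) :
    ‖z - ρ⁻¹‖^2 = (z.re - 1/2)^2 + (z.im + Real.sqrt 3 / 2)^2 := by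
  rw [Complex.sq_norm, Complex.normSq_apply, rho_inv_eq]
  simp [Complex.sub_re, Complex.sub_im]
  ring

lemma key (z : ℂ) :
    ‖z - ρ‖^2 = ‖z - ρ⁻¹‖^2 - 2 * Real.sqrt 3 * z.im := by
  rw [sq_abs_sub_rho_inv, Complex.sq_norm, Complex.normSq_apply, rho_eq]
  simp [Complex.sub_re, Complex.sub_im]
  ring

lemma denom_pos (z : ℂ) (hz : 0 < z.im) : 0 < ‖z - ρ⁻¹‖ := by
  have h : (z - ρ⁻¹).im > 0 := by
    rw [rho_inv_eq]; simp [Complex.sub_im]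
    positivity
  have : z - ρ⁻¹ ≠ 0 := fun h0 => by simp [h0] at h
  exact norm_pos_iff.mpr this

theorem stmt8 (z z' : ℂ) (hz : 0 < z.im) (hz' : 0 < z'.im) :
    ‖z - ρ‖ / ‖z - ρ⁻¹‖ =
        ‖z' - ρ‖ / ‖z' - ρ⁻¹‖ ↔
      z.im / (‖z - ρ⁻¹‖) ^ 2 = z'.im / (‖z' - ρ⁻¹‖) ^ 2 := by
  have hB := denom_pos z hz
  have hB' := denom_pos z' hz'
  set A := ‖z - ρ‖ with hA
  set B := ‖z - ρ⁻¹‖ with hBd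
  set A' := ‖z' - ρ‖ with hA'
  set B' := ‖z' - ρ⁻¹‖ with hB'd
  have hk := key z
  have hk' := key z'
  have hA0 : 0 ≤ A := norm_nonneg _
  have hA'0 : 0 ≤ A' := norm_nonneg _
  have hs3 : (0:ℝ) < Real.sqrt 3 := Real.sqrt_pos.mpr (by norm_num)
  rw [div_eq_div_iff hB.ne' hB'.ne', div_eq_div_iff (pow_pos hB 2).ne' (pow_pos hB' 2).ne']
  constructor
  · intro h
    have h2 : (A * B')^2 = (A' * B)^2 := by rw [h]
    nlinarith [hk, hk']
  · intro h
    have h2 : (A * B')^2 = (A' * B)^2 := by nlinarith [hk, hk']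
    exact (sq_eq_sq₀ (mul_nonneg hA0 hB'.le) (mul_nonneg hA'0 hB.le)).mp h2
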